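/- Let H be a bipartite graph with bipartition A ∪ B and r := max_{b∈B} deg(b), and for 1 ≤ k ≤ r let α_k := d_k / C(|A|, k), where d_k is the number of vertices in B of degree k. Then, for J the (|A|, r)-downset graph and the symmetric weight vector α = (α_k)_{k=1}^r, every graphon W satisfies t_H(W) ≥ t_J^α(W). -/

import Mathlib

open MeasureTheory

/-- The unit box `[0,1]^ι`. -/
def unitBox (ι : Type*) : Set (ι → ℝ) := Set.univ.pi fun _ => Set.Icc (0 : ℝ) 1

/-- `ρ(x_F) = ∫_0^1 ∏_{i ∈ F} W(x_i, y) dy`. -/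
noncomputable def rho {A : Type*} (W : ℝ → ℝ → ℝ) (x : A → ℝ) (F : Finset A) : ℝ :=
  ∫ y in Set.Icc (0 : ℝ) 1, ∏ i ∈ F, W (x i) y

/-- The homomorphism density of a bipartite graph, given by its parts `A`, `B` and
its edge set `E ⊆ A × B`, in a graphon `W`. -/
noncomputable def bipDensity {A B : Type*} [Fintype A] [Fintype B]
    (E : Finset (A × B)) (W : ℝ → ℝ → ℝ) : ℝ :=
  ∫ x in unitBox A, ∫ y in unitBox B, ∏ e ∈ E, W (x e.1) (y e.2)

/-- The `α`-weighted homomorphism density of the `(m,r)`-downset graph for a symmetric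
real weight vector `α = (α_k)_{k=1}^r` (real powers). -/
noncomputable def downsetDensityReal (m r : ℕ) (α : ℕ → ℝ) (W : ℝ → ℝ → ℝ) : ℝ :=
  ∫ x in unitBox (Fin m),
    ∏ F ∈ Finset.univ.filter (fun F : Finset (Fin m) => 1 ≤ F.card ∧ F.card ≤ r),
      rho W x F ^ α F.card

section Aux

open Finset

variable {A : Type*} {W : ℝ → ℝ → ℝ}

lemma unitBox_measurableSet (ι : Type*) [Countable ι] : MeasurableSet (unitBox ι) :=
  MeasurableSet.univ_pi fun _ => measurableSet_Icc

lemma rho_nonneg (hW : ∀ x y, 0 ≤ W x y) (x : A → ℝ) (F : Finset A) : 0 ≤ rho W x F :=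
  integral_nonneg fun y => Finset.prod_nonneg fun i _ => hW _ _

lemma rho_empty (x : A → ℝ) : rho W x ∅ = 1 := by
  simp [rho, Real.volume_Icc]

lemma rho_le_one (hW : ∀ x y, W x y ∈ Set.Icc (0:ℝ) 1) (x : A → ℝ) (F : Finset A) :
    rho W x F ≤ 1 := by
  have h1 : rho W x F ≤ ∫ _ in Set.Icc (0:ℝ) 1, (1:ℝ) := by
    apply integral_mono_of_nonneg
    · exact Filter.Eventually.of_forall fun y => Finset.prod_nonneg fun i _ => (hW _ _).1
    · exact integrable_const _
    · exact Filter.Eventually.of_forall fun y =>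
        Finset.prod_le_one (fun i _ => (hW _ _).1) (fun i _ => (hW _ _).2)
  simpa [Real.volume_Icc] using h1

lemma measurable_rho (hWmeas : Measurable (Function.uncurry W)) (F : Finset A) :
    Measurable fun x : A → ℝ => rho W x F := by
  have hf : StronglyMeasurable fun p : (A → ℝ) × ℝ => ∏ i ∈ F, W (p.1 i) p.2 := by
    apply Measurable.stronglyMeasurable
    refine Finset.measurable_prod _ fun i _ => ?_
    have : (fun p : (A → ℝ) × ℝ => W (p.1 i) p.2) =
        Function.uncurry W ∘ fun p : (A → ℝ) × ℝ => (p.1 i, p.2) := rfl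
    rw [this]
    exact hWmeas.comp (((measurable_pi_apply i).comp measurable_fst).prodMk measurable_snd)
  exact (hf.integral_prod_right').measurable

lemma rho_comp {B : Type*} (x : A → ℝ) (g : B → A) (hg : Function.Injective g)
    [DecidableEq A] (F : Finset B) :
    rho W (x ∘ g) F = rho W x (F.image g) := by
  unfold rho
  congr 1
  ext y
  rw [Finset.prod_image (fun a _ b _ h => hg h)]
  rfl

end Aux

section Aux2

open Finset

lemma volume_unitBox (ι : Type*) [Fintype ι] : volume (unitBox ι) = 1 := by
  rw [unitBox, volume_pi_pi]
  simp [Real.volume_Icc]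

instance unitBox_prob (ι : Type*) [Fintype ι] :
    IsProbabilityMeasure (volume.restrict (unitBox ι)) :=
  ⟨by rw [Measure.restrict_apply_univ, volume_unitBox]⟩

/-- Fubini over the unit box. -/
lemma integral_unitBox_prod {ι : Type*} [Fintype ι] (g : ι → ℝ → ℝ) :
    ∫ y in unitBox ι, ∏ i, g i (y i) = ∏ i, ∫ t in Set.Icc (0:ℝ) 1, g i t := by
  rw [← integral_indicator (unitBox_measurableSet ι)]
  have h : (unitBox ι).indicator (fun y => ∏ i, g i (y i)) =
      fun y => ∏ i, (Set.Icc (0:ℝ) 1).indicator (g i) (y i) := by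
    funext y
    by_cases hy : y ∈ unitBox ι
    · rw [Set.indicator_of_mem hy]
      exact Finset.prod_congr rfl fun i _ =>
        (Set.indicator_of_mem (hy i (Set.mem_univ i)) _).symm
    · rw [Set.indicator_of_notMem hy]
      have : ∃ i, y i ∉ Set.Icc (0:ℝ) 1 := by
        by_contra hcon
        push_neg at hcon
        exact hy fun i _ => hcon i
      obtain ⟨i, hi⟩ := this
      exact (Finset.prod_eq_zero (mem_univ i) (Set.indicator_of_notMem hi _)).symm
  rw [h, volume_pi, MeasureTheory.integral_fintype_prod_eq_prod
    (f := fun i => (Set.Icc (0:ℝ) 1).indicator (g i))]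
  exact Finset.prod_congr rfl fun i _ => integral_indicator measurableSet_Icc

/-- Change of variables by a bijection of coordinates over the unit box. -/
lemma integral_unitBox_comp_equiv {ι κ : Type*} [Fintype ι] [Fintype κ] (e : ι ≃ κ)
    (f : (ι → ℝ) → ℝ) :
    ∫ x in unitBox κ, f (x ∘ e) = ∫ x in unitBox ι, f x := by
  let T : (ι → ℝ) ≃ᵐ (κ → ℝ) := MeasurableEquiv.piCongrLeft (fun _ => ℝ) e
  have hTvol : MeasurePreserving T volume volume :=
    volume_measurePreserving_piCongrLeft (fun _ => ℝ) e
  have hpre : T ⁻¹' unitBox κ = unitBox ι := by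
    ext x
    have hT : ∀ k, T x k = x (e.symm k) := fun k => by
      simp [T, MeasurableEquiv.piCongrLeft, Equiv.piCongrLeft, Equiv.piCongrLeft']
    constructor
    · intro hx i hi
      have := hx (e i) (Set.mem_univ _)
      rwa [hT, Equiv.symm_apply_apply] at this
    · intro hx k _
      rw [hT]
      exact hx (e.symm k) (Set.mem_univ _)
  have hT : MeasurePreserving T (volume.restrict (unitBox ι))
      (volume.restrict (unitBox κ)) := by
    constructor
    · exact T.measurable
    · rw [← hpre, ← Measure.restrict_map T.measurable (unitBox_measurableSet κ), hTvol.map_eq]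
  have hTsymm : MeasurePreserving T.symm (volume.restrict (unitBox κ))
      (volume.restrict (unitBox ι)) := hT.symm T
  have hcomp : ∀ x : κ → ℝ, T.symm x = x ∘ e := fun x => by
    funext i
    simp [T, MeasurableEquiv.piCongrLeft, Equiv.piCongrLeft, Equiv.piCongrLeft']
  calc ∫ x in unitBox κ, f (x ∘ e) = ∫ x in unitBox κ, f (T.symm x) := by
        simp_rw [hcomp]
      _ = ∫ x in unitBox ι, f x := hTsymm.integral_comp' f

end Aux2

section Holder

open Finset

lemma holder_finset_integral {Ω : Type*} [MeasurableSpace Ω] {μ : Measure Ω}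
    [IsFiniteMeasure μ] {ι : Type*} (s : Finset ι) (g : ι → Ω → ℝ) (p : ι → ℝ)
    (hmeas : ∀ i ∈ s, Measurable (g i)) (h0 : ∀ i ∈ s, ∀ x, 0 ≤ g i x)
    (h1 : ∀ i ∈ s, ∀ x, g i x ≤ 1) (hp : ∀ i ∈ s, 0 ≤ p i) (hps : ∑ i ∈ s, p i = 1) :
    ∫ x, ∏ i ∈ s, g i x ^ p i ∂μ ≤ ∏ i ∈ s, (∫ x, g i x ∂μ) ^ p i := by
  have hmeas' : ∀ i ∈ s, Measurable fun x => g i x ^ p i := fun i hi =>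
    (continuous_id.rpow_const fun _ => Or.inr (hp i hi)).measurable.comp (hmeas i hi)
  have hlint_lt : ∀ i ∈ s, (∫⁻ x, ENNReal.ofReal (g i x) ∂μ) ≠ ⊤ := by
    intro i hi
    have : (∫⁻ x, ENNReal.ofReal (g i x) ∂μ) ≤ ∫⁻ _, 1 ∂μ :=
      lintegral_mono fun x => ENNReal.ofReal_le_one.2 (h1 i hi x)
    rw [lintegral_one] at this
    exact (lt_of_le_of_lt this (measure_lt_top μ _)).ne
  have key := ENNReal.lintegral_prod_norm_pow_le (μ := μ) s
    (f := fun i x => ENNReal.ofReal (g i x))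
    (fun i hi => (ENNReal.measurable_ofReal.comp (hmeas i hi)).aemeasurable) hps hp
  -- rewrite LHS
  have hL : ∫ x, ∏ i ∈ s, g i x ^ p i ∂μ =
      (∫⁻ x, ∏ i ∈ s, ENNReal.ofReal (g i x) ^ p i ∂μ).toReal := by
    rw [integral_eq_lintegral_of_nonneg_ae
      (Filter.Eventually.of_forall fun x => Finset.prod_nonneg fun i hi =>
        Real.rpow_nonneg (h0 i hi x) _)
      ((Finset.measurable_prod _ fun i hi => hmeas' i hi).aestronglyMeasurable)]
    congr 1
    apply lintegral_congr fun x => ?_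
    rw [ENNReal.ofReal_prod_of_nonneg fun i hi => Real.rpow_nonneg (h0 i hi x) _]
    exact Finset.prod_congr rfl fun i hi =>
      (ENNReal.ofReal_rpow_of_nonneg (h0 i hi x) (hp i hi)).symm
  have hR : ∏ i ∈ s, (∫ x, g i x ∂μ) ^ p i =
      (∏ i ∈ s, (∫⁻ x, ENNReal.ofReal (g i x) ∂μ) ^ p i).toReal := by
    rw [ENNReal.toReal_prod]
    refine Finset.prod_congr rfl fun i hi => ?_
    rw [integral_eq_lintegral_of_nonneg_ae
      (Filter.Eventually.of_forall fun x => h0 i hi x) (hmeas i hi).aestronglyMeasurable]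
    exact ENNReal.toReal_rpow _ _
  rw [hL, hR]
  apply ENNReal.toReal_mono _ key
  exact ENNReal.prod_ne_top fun i hi => ENNReal.rpow_ne_top_of_nonneg (hp i hi) (hlint_lt i hi)

/-- `x ^ (∑ p i) = ∏ x ^ p i` for `0 ≤ x` and nonnegative exponents. -/
lemma rpow_sum_of_nonneg {x : ℝ} (hx : 0 ≤ x) {ι : Type*} (s : Finset ι) (p : ι → ℝ)
    (hp : ∀ i ∈ s, 0 ≤ p i) : x ^ (∑ i ∈ s, p i) = ∏ i ∈ s, x ^ p i := by
  rcases hx.lt_or_eq with hx' | hx'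
  · classical
    revert hp
    induction s using Finset.induction_on with
    | empty => simp
    | @insert a t hni ih =>
      intro hp
      rw [Finset.sum_insert hni, Finset.prod_insert hni, Real.rpow_add hx',
        ih fun i hi => hp i (Finset.mem_insert_of_mem hi)]
  · subst hx'
    by_cases hall : ∀ i ∈ s, p i = 0
    · rw [Finset.sum_eq_zero hall, Real.rpow_zero]
      exact (Finset.prod_eq_one fun i hi => by rw [hall i hi, Real.rpow_zero]).symm
    · push_neg at hall
      obtain ⟨i, hi, hpi⟩ := hall
      have hpi' : 0 < p i := (hp i hi).lt_of_ne (Ne.symm hpi)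
      have hsum : 0 < ∑ j ∈ s, p j :=
        Finset.sum_pos' hp ⟨i, hi, hpi'⟩
      rw [Real.zero_rpow hsum.ne']
      exact (Finset.prod_eq_zero hi (Real.zero_rpow hpi'.ne')).symm

end Holder

section Counting

open Finset Equiv

variable {A : Type*} [Fintype A] [DecidableEq A]

lemma exists_perm_image (S F : Finset A) (h : S.card = F.card) :
    ∃ τ : Equiv.Perm A, S.image τ = F := by
  have hcard : Fintype.card {x // x ∈ S} = Fintype.card {x // x ∈ F} := by
    simp [Fintype.card_coe, h]
  let e : {x // x ∈ S} ≃ {x // x ∈ F} := Fintype.equivOfCardEq hcard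
  refine ⟨e.extendSubtype, ?_⟩
  apply Finset.eq_of_subset_of_card_le
  · intro a ha
    obtain ⟨b, hb, rfl⟩ := Finset.mem_image.1 ha
    exact e.extendSubtype_mem b hb
  · rw [Finset.card_image_of_injective _ (Equiv.injective _), h]

lemma card_fiber_translate (S F G : Finset A) (τ : Equiv.Perm A) (hτ : F.image τ = G) :
    ((univ : Finset (Equiv.Perm A)).filter fun σ : Equiv.Perm A => S.image (⇑σ) = F).card =
    ((univ : Finset (Equiv.Perm A)).filter fun σ : Equiv.Perm A => S.image (⇑σ) = G).card := by
  apply Finset.card_bij' (fun σ _ => τ * σ) (fun σ _ => τ⁻¹ * σ)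
  · intro σ hσ
    rw [Finset.mem_filter] at hσ ⊢
    refine ⟨mem_univ _, ?_⟩
    have h2 : S.image ⇑(τ * σ) = (S.image ⇑σ).image ⇑τ := by
      rw [Finset.image_image]; rfl
    rw [h2, hσ.2, hτ]
  · intro σ hσ
    rw [Finset.mem_filter] at hσ ⊢
    refine ⟨mem_univ _, ?_⟩
    have h2 : S.image ⇑(τ⁻¹ * σ) = (S.image ⇑σ).image ⇑τ⁻¹ := by
      rw [Finset.image_image]; rfl
    rw [h2, hσ.2, ← hτ, Finset.image_image]
    have h3 : (⇑τ⁻¹ ∘ ⇑τ) = id := by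
      funext a; simp
    rw [h3, Finset.image_id]
  · intro σ _; group
  · intro σ _; group

lemma card_fiber_mul_choose (S F : Finset A) (h : S.card = F.card) :
    ((univ : Finset (Equiv.Perm A)).filter fun σ : Equiv.Perm A => S.image (⇑σ) = F).card *
      (Fintype.card A).choose S.card = (Fintype.card A).factorial := by
  classical
  set k := S.card with hk
  have hmaps : ∀ σ : Equiv.Perm A, σ ∈ (univ : Finset (Equiv.Perm A)) →
      S.image σ ∈ (univ : Finset (Finset A)).filter fun G => G.card = k := by
    intro σ _
    simp [Finset.card_image_of_injective _ (Equiv.injective σ), hk]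
  have hpart := Finset.card_eq_sum_card_fiberwise hmaps
  rw [Finset.card_univ, Fintype.card_perm] at hpart
  have hconst : ∀ G ∈ (univ : Finset (Finset A)).filter fun G => G.card = k,
      ((univ : Finset (Equiv.Perm A)).filter fun σ : Equiv.Perm A => S.image (⇑σ) = G).card =
      ((univ : Finset (Equiv.Perm A)).filter fun σ : Equiv.Perm A => S.image (⇑σ) = F).card := by
    intro G hG
    rw [Finset.mem_filter] at hG
    obtain ⟨τ, hτ⟩ := exists_perm_image F G (h ▸ hG.2.symm)
    exact (card_fiber_translate S F G τ hτ).symm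
  rw [Finset.sum_congr rfl hconst, Finset.sum_const, smul_eq_mul] at hpart
  have hcardt : ((univ : Finset (Finset A)).filter fun G => G.card = k).card =
      (Fintype.card A).choose k := by
    rw [← Finset.powerset_univ, ← Finset.powersetCard_eq_filter,
      Finset.card_powersetCard, Finset.card_univ]
  rw [hcardt] at hpart
  rw [mul_comm]
  exact hpart.symm

end Counting

section Sym

open Finset

variable {A B : Type*} [Fintype A] [DecidableEq A] [Fintype B] [DecidableEq B]

lemma sym_identity (E : Finset (A × B)) (r : ℕ)
    (hr : r = Finset.univ.sup fun b : B => (E.filter fun e => e.2 = b).card)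
    (α : ℕ → ℝ)
    (hα : ∀ k, 1 ≤ k → k ≤ r → α k = ((Finset.univ.filter fun b : B =>
        (E.filter fun e => e.2 = b).card = k).card : ℝ) / ((Fintype.card A).choose k : ℝ))
    (ρ : Finset A → ℝ) (hρ0 : ∀ F, 0 ≤ ρ F) (hρe : ρ ∅ = 1) :
    ∏ F ∈ univ.filter (fun F : Finset A => 1 ≤ F.card ∧ F.card ≤ r), ρ F ^ α F.card
      = ∏ σ : Equiv.Perm A,
          (∏ b : B, ρ (((E.filter fun e => e.2 = b).image Prod.fst).image σ))
            ^ (((Fintype.card A).factorial : ℝ)⁻¹) := by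
  set n := Fintype.card A with hn
  set q : ℝ := ((n.factorial : ℝ))⁻¹ with hqdef
  set N : B → Finset A := fun b => (E.filter fun e => e.2 = b).image Prod.fst with hNdef
  have hN : ∀ b, (N b).card = (E.filter fun e => e.2 = b).card := by
    intro b
    apply Finset.card_image_of_injOn
    intro e he e' he' hee
    have h1 := (Finset.mem_filter.1 he).2
    have h2 := (Finset.mem_filter.1 he').2
    exact Prod.ext hee (h1.trans h2.symm)
  have hdeg_le : ∀ b, (E.filter fun e => e.2 = b).card ≤ r := by
    intro b
    rw [hr]
    exact Finset.le_sup (f := fun b : B => (E.filter fun e => e.2 = b).card) (mem_univ b)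
  have hfact0 : ((n.factorial : ℝ)) ≠ 0 := Nat.cast_ne_zero.2 n.factorial_ne_zero
  -- the exponent function
  set ex : B → Finset A → ℝ := fun b F =>
    if F.card = (N b).card then ((n.choose F.card : ℝ))⁻¹ else 0 with hexdef
  have hex0 : ∀ b F, 0 ≤ ex b F := by
    intro b F
    simp only [hexdef]
    by_cases h : F.card = (N b).card
    · rw [if_pos h]
      positivity
    · rw [if_neg h]
  -- per-b identity
  have hb : ∀ b : B, ∏ σ : Equiv.Perm A, ρ ((N b).image σ) ^ q
      = ∏ F : Finset A, ρ F ^ ex b F := by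
    intro b
    set k := (N b).card with hkdef
    have hkn : k ≤ n := Finset.card_le_univ _
    have hch0 : ((n.choose k : ℝ)) ≠ 0 := Nat.cast_ne_zero.2 (Nat.choose_pos hkn).ne'
    have hmaps : ∀ σ : Equiv.Perm A, σ ∈ (univ : Finset (Equiv.Perm A)) →
        (N b).image ⇑σ ∈ (univ : Finset (Finset A)).filter fun F => F.card = k := by
      intro σ _
      simp [Finset.card_image_of_injective _ (Equiv.injective σ), hkdef]
    have step1 : ∏ F ∈ (univ : Finset (Finset A)).filter (fun F => F.card = k),
        ∏ σ ∈ (univ : Finset (Equiv.Perm A)).filter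
          (fun σ : Equiv.Perm A => (N b).image ⇑σ = F), ρ ((N b).image ⇑σ) ^ q
        = ∏ σ : Equiv.Perm A, ρ ((N b).image ⇑σ) ^ q :=
      Finset.prod_fiberwise_of_maps_to hmaps (fun σ => ρ ((N b).image ⇑σ) ^ q)
    rw [← step1]
    have step2 : ∀ F ∈ (univ : Finset (Finset A)).filter fun F => F.card = k,
        ∏ σ ∈ (univ : Finset (Equiv.Perm A)).filter
            (fun σ : Equiv.Perm A => (N b).image ⇑σ = F), ρ ((N b).image ⇑σ) ^ q
          = ρ F ^ ((n.choose F.card : ℝ))⁻¹ := by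
      intro F hF
      have hFk : F.card = k := (Finset.mem_filter.1 hF).2
      have hcount := card_fiber_mul_choose (N b) F (by rw [hFk])
      rw [Finset.prod_congr rfl (fun σ hσ => by rw [(Finset.mem_filter.1 hσ).2]),
        Finset.prod_const]
      rw [← Real.rpow_natCast (ρ F ^ q), ← Real.rpow_mul (hρ0 F)]
      congr 1
      rw [hFk]
      have hcast : (((univ : Finset (Equiv.Perm A)).filter
          fun σ : Equiv.Perm A => (N b).image (⇑σ) = F).card : ℝ) * (n.choose k : ℝ)
          = (n.factorial : ℝ) := by exact_mod_cast hcount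
      field_simp [hqdef]
      rw [hqdef]
      field_simp
      linarith [hcast]
    rw [Finset.prod_congr rfl step2]
    rw [Finset.prod_filter]
    apply Finset.prod_congr rfl
    intro F _
    rw [hexdef]
    dsimp only
    by_cases hFk : F.card = k
    · rw [if_pos hFk, if_pos hFk]
    · rw [if_neg hFk, if_neg hFk, Real.rpow_zero]
  -- now the main computation
  have hsum : ∀ F : Finset A, ∑ b : B, ex b F =
      ((univ.filter fun b : B => (E.filter fun e => e.2 = b).card = F.card).card : ℝ) *
        ((n.choose F.card : ℝ))⁻¹ := by
    intro F
    rw [hexdef]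
    dsimp only
    rw [← Finset.sum_filter]
    rw [Finset.sum_const, nsmul_eq_mul]
    have hfil : (univ.filter fun b : B => F.card = (N b).card) =
        (univ.filter fun b : B => (E.filter fun e => e.2 = b).card = F.card) := by
      apply Finset.filter_congr
      intro b _
      rw [hN b]
      exact eq_comm
    rw [hfil]
  calc ∏ F ∈ univ.filter (fun F : Finset A => 1 ≤ F.card ∧ F.card ≤ r), ρ F ^ α F.card
      = ∏ F : Finset A, if 1 ≤ F.card ∧ F.card ≤ r then ρ F ^ α F.card else 1 := by
        rw [Finset.prod_filter]
    _ = ∏ F : Finset A, ρ F ^ (∑ b : B, ex b F) := by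
        apply Finset.prod_congr rfl
        intro F _
        rw [hsum F]
        by_cases hcond : 1 ≤ F.card ∧ F.card ≤ r
        · rw [if_pos hcond, hα F.card hcond.1 hcond.2, div_eq_mul_inv]
        · rw [if_neg hcond]
          rcases Nat.lt_or_ge F.card 1 with h0 | h1
          · have : F = ∅ := Finset.card_eq_zero.1 (by omega)
            rw [this, hρe, Real.one_rpow]
          · have hrF : r < F.card := by
              by_contra hcon
              push_neg at hcon
              exact hcond ⟨h1, hcon⟩
            have hempty : (univ.filter fun b : B =>
                (E.filter fun e => e.2 = b).card = F.card) = ∅ := by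
              apply Finset.filter_false_of_mem
              intro b _
              intro hbe
              have := hdeg_le b
              omega
            rw [hempty]
            simp
    _ = ∏ F : Finset A, ∏ b : B, ρ F ^ ex b F := by
        apply Finset.prod_congr rfl
        intro F _
        exact rpow_sum_of_nonneg (hρ0 F) univ _ (fun b _ => hex0 b F)
    _ = ∏ b : B, ∏ F : Finset A, ρ F ^ ex b F := Finset.prod_comm
    _ = ∏ b : B, ∏ σ : Equiv.Perm A, ρ ((N b).image σ) ^ q := by
        apply Finset.prod_congr rfl
        intro b _
        exact (hb b).symm
    _ = ∏ σ : Equiv.Perm A, ∏ b : B, ρ ((N b).image σ) ^ q := Finset.prod_comm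
    _ = ∏ σ : Equiv.Perm A, (∏ b : B, ρ ((N b).image σ)) ^ q := by
        apply Finset.prod_congr rfl
        intro σ _
        exact Real.finset_prod_rpow univ _ (fun b _ => hρ0 _) q

end Sym


section Main

open Finset

lemma prod_const_rpow_perm {A : Type*} [Fintype A] [DecidableEq A] {C : ℝ} (hC : 0 ≤ C) :
    ∏ _σ : Equiv.Perm A, C ^ (((Fintype.card A).factorial : ℝ))⁻¹ = C := by
  have hf0 : ((Fintype.card A).factorial : ℝ) ≠ 0 :=
    Nat.cast_ne_zero.2 (Fintype.card A).factorial_ne_zero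
  rw [Finset.prod_const, Finset.card_univ, Fintype.card_perm,
    ← Real.rpow_natCast (C ^ (((Fintype.card A).factorial : ℝ))⁻¹),
    ← Real.rpow_mul hC, inv_mul_cancel₀ hf0, Real.rpow_one]

lemma bipDensity_eq {A B : Type*} [Fintype A] [Fintype B] [DecidableEq A] [DecidableEq B]
    (E : Finset (A × B)) (W : ℝ → ℝ → ℝ) :
    bipDensity E W = ∫ x in unitBox A,
      ∏ b : B, rho W x ((E.filter fun e => e.2 = b).image Prod.fst) := by
  unfold bipDensity
  apply integral_congr_ae
  refine Filter.Eventually.of_forall fun x => ?_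
  have step1 : ∀ y : B → ℝ, ∏ e ∈ E, W (x e.1) (y e.2) =
      ∏ b : B, ∏ e ∈ E.filter (fun e => e.2 = b), W (x e.1) (y b) := by
    intro y
    rw [← Finset.prod_fiberwise E (fun e => e.2) (fun e => W (x e.1) (y e.2))]
    exact Finset.prod_congr rfl fun b _ => Finset.prod_congr rfl fun e he => by
      rw [(Finset.mem_filter.1 he).2]
  simp_rw [step1]
  rw [integral_unitBox_prod (fun b t => ∏ e ∈ E.filter (fun e => e.2 = b), W (x e.1) t)]
  refine Finset.prod_congr rfl fun b _ => ?_
  unfold rho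
  apply integral_congr_ae
  refine Filter.Eventually.of_forall fun t => ?_
  dsimp only
  have himg : ∏ i ∈ (E.filter fun e => e.2 = b).image Prod.fst, W (x i) t
      = ∏ e ∈ E.filter (fun e => e.2 = b), W (x e.1) t := by
    apply Finset.prod_image
    intro e he e' he' hee
    have h1 := (Finset.mem_filter.1 he).2
    have h2 := (Finset.mem_filter.1 he').2
    exact Prod.ext hee (h1.trans h2.symm)
  exact himg.symm

/-- let `H` be a bipartite graph with bipartition `A ∪ B`, let
`r = max_{b ∈ B} deg b` and, for `1 ≤ k ≤ r`, let `α_k = d_k / C(|A|,k)` where `d_k` is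
the number of vertices of `B` of degree `k`. Then `t_H(W) ≥ t_J^α(W)` for every
graphon `W`, where `J` is the `(|A|, r)`-downset graph. -/
theorem holder_trick_downset {A B : Type*} [Fintype A] [Fintype B] [DecidableEq B]
    (E : Finset (A × B))
    (r : ℕ) (hr : r = Finset.univ.sup fun b : B => (E.filter fun e => e.2 = b).card)
    (α : ℕ → ℝ)
    (hα : ∀ k, 1 ≤ k → k ≤ r →
      α k = ((Finset.univ.filter fun b : B =>
          (E.filter fun e => e.2 = b).card = k).card : ℝ) /
        ((Fintype.card A).choose k : ℝ))
    (W : ℝ → ℝ → ℝ) (hWmeas : Measurable (Function.uncurry W))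
    (hWsymm : ∀ x y, W x y = W y x) (hWmem : ∀ x y, W x y ∈ Set.Icc (0 : ℝ) 1) :
    bipDensity E W ≥ downsetDensityReal (Fintype.card A) r α W := by

  classical
  set n := Fintype.card A with hn
  set N : B → Finset A := fun b => (E.filter fun e => e.2 = b).image Prod.fst with hNdef
  set P : (A → ℝ) → ℝ := fun x => ∏ b : B, rho W x (N b) with hPdef
  set q : ℝ := ((n.factorial : ℝ))⁻¹ with hqdef
  have hfact0 : ((n.factorial : ℝ)) ≠ 0 := Nat.cast_ne_zero.2 n.factorial_ne_zero
  have hq0 : 0 ≤ q := by positivity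
  have hW0 : ∀ x y, 0 ≤ W x y := fun x y => (hWmem x y).1
  have hPmeas : Measurable P :=
    Finset.measurable_prod _ fun b _ => measurable_rho hWmeas (N b)
  have hP0 : ∀ x, 0 ≤ P x := fun x => Finset.prod_nonneg fun b _ => rho_nonneg hW0 x _
  have hP1 : ∀ x, P x ≤ 1 := fun x =>
    Finset.prod_le_one (fun b _ => rho_nonneg hW0 x _) (fun b _ => rho_le_one hWmem x _)
  let e : Fin n ≃ A := (Fintype.equivFin A).symm
  -- rewrite the downset density as an integral over `unitBox A`
  have hdown : downsetDensityReal n r α W = ∫ x in unitBox A,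
      ∏ F ∈ univ.filter (fun F : Finset A => 1 ≤ F.card ∧ F.card ≤ r),
        rho W x F ^ α F.card := by
    rw [downsetDensityReal,
      ← integral_unitBox_comp_equiv e (fun y : Fin n → ℝ =>
        ∏ F ∈ univ.filter (fun F : Finset (Fin n) => 1 ≤ F.card ∧ F.card ≤ r),
          rho W y F ^ α F.card)]
    apply integral_congr_ae
    refine Filter.Eventually.of_forall fun x => ?_
    refine Finset.prod_nbij' (fun F => F.image e) (fun G => G.image e.symm) ?_ ?_ ?_ ?_ ?_
    · intro F hF
      rw [Finset.mem_filter] at hF ⊢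
      rw [Finset.card_image_of_injective _ (Equiv.injective e)]
      exact ⟨mem_univ _, hF.2⟩
    · intro G hG
      rw [Finset.mem_filter] at hG ⊢
      rw [Finset.card_image_of_injective _ (Equiv.injective e.symm)]
      exact ⟨mem_univ _, hG.2⟩
    · intro F _
      simp [Finset.image_image, Function.comp]
    · intro G _
      simp [Finset.image_image, Function.comp]
    · intro F _
      rw [← rho_comp x (⇑e) (Equiv.injective e) F,
        Finset.card_image_of_injective _ (Equiv.injective e)]
  -- pointwise symmetrization identity
  have hsym : ∀ x : A → ℝ,
      (∏ F ∈ univ.filter (fun F : Finset A => 1 ≤ F.card ∧ F.card ≤ r),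
        rho W x F ^ α F.card) = ∏ σ : Equiv.Perm A, (P (x ∘ σ)) ^ q := by
    intro x
    rw [sym_identity E r hr α hα (fun F => rho W x F)
      (fun F => rho_nonneg hW0 x F) (rho_empty x)]
    refine Finset.prod_congr rfl fun σ _ => ?_
    congr 1
    refine Finset.prod_congr rfl fun b _ => ?_
    rw [← rho_comp x (⇑σ) (Equiv.injective σ) (N b)]
  -- Hölder
  have hmeas' : ∀ σ : Equiv.Perm A, Measurable fun x : A → ℝ => P (x ∘ σ) := fun σ =>
    hPmeas.comp (measurable_pi_lambda _ fun a => measurable_pi_apply (σ a))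
  have hHolder : (∫ x in unitBox A, ∏ σ : Equiv.Perm A, (P (x ∘ σ)) ^ q)
      ≤ ∏ σ : Equiv.Perm A, (∫ x in unitBox A, P (x ∘ σ)) ^ q := by
    apply holder_finset_integral (univ : Finset (Equiv.Perm A))
      (fun (σ : Equiv.Perm A) (x : A → ℝ) => P (x ∘ σ)) (fun _ => q)
      (fun σ _ => hmeas' σ) (fun σ _ x => hP0 _) (fun σ _ x => hP1 _) (fun _ _ => hq0)
    rw [Finset.sum_const, Finset.card_univ, Fintype.card_perm, nsmul_eq_mul, hqdef,
      mul_inv_cancel₀ hfact0]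
  have hshift : ∀ σ : Equiv.Perm A,
      (∫ x in unitBox A, P (x ∘ σ)) = ∫ x in unitBox A, P x := fun σ =>
    integral_unitBox_comp_equiv (σ : A ≃ A) P
  have hint0 : 0 ≤ ∫ x in unitBox A, P x := integral_nonneg fun x => hP0 x
  rw [ge_iff_le]
  calc downsetDensityReal n r α W
      = ∫ x in unitBox A, ∏ σ : Equiv.Perm A, (P (x ∘ σ)) ^ q := by
        rw [hdown]
        exact integral_congr_ae (Filter.Eventually.of_forall fun x => hsym x)
    _ ≤ ∏ σ : Equiv.Perm A, (∫ x in unitBox A, P (x ∘ σ)) ^ q := hHolder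
    _ = ∏ _σ : Equiv.Perm A, (∫ x in unitBox A, P x) ^ q :=
        Finset.prod_congr rfl fun σ _ => by rw [hshift σ]
    _ = ∫ x in unitBox A, P x := prod_const_rpow_perm hint0
    _ = bipDensity E W := (bipDensity_eq E W).symm

end Main
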